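/- Let D > 0, Δt > 0, d > 0, and K(ξ, Δt) = (4πDΔt)^{−1/2} exp(−ξ²/(4DΔt)). Let Ω_P = (−∞,0) and Ω_B = (−d,∞), with overlap O = (−d,0). Let p : Ω_P → [0,∞) be integrable, let x₁, …, x_m ∈ Ω_B be fixed particle positions, and define μ = p·1_{Ω_P} dx + Σ_{i=1}^m δ_{x_i}, p̃(x) = ∫_{Ω_P} K(x − x', Δt) p(x') dx', and α = ∫_0^∞ p̃(x) dx, assuming 0 < α < 1. Perform one step of the PBD algorithm with overlap (B1)–(B5): let ξ be Bernoulli(α); on ξ = 1 create one particle at Y with density p₂(x) = p̃(x)/α on Ω_B ∖ Ω_P = (0,∞); set β = (N − m − 1)/(N − m − α) if ξ = 1 and β = (N − m)/(N − m − α) if ξ = 0, where ∫_{Ω_P} p = N − m and α < N − m; move each particle to Z_i = x_i + √(2DΔt) η_i with independent standard normals η_i; the updated continuum measure on Ω_P is q = β p̃·1_{Ω_P} dx + Σ_{i : Z_i ≤ −d} δ_{Z_i}, and the updated particle set in Ω_B is {Y if ξ = 1} ∪ {Z_i : Z_i > −d}. Then for every Borel set A ⊆ ℝ, E[q(A ∩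 Ω_P)] + E[#{updated particles in A}] = ∫_A ∫_ℝ K(x − x', Δt) dμ(x') dx. -/

import Mathlib

open MeasureTheory ProbabilityTheory Set
open scoped Classical

/-- The Gaussian heat kernel `K(ξ, τ) = (4πDτ)^{-1/2} exp(-ξ²/(4Dτ))`. -/
noncomputable def heatKernel (D ξ τ : ℝ) : ℝ :=
  (Real.sqrt (4 * Real.pi * D * τ))⁻¹ * Real.exp (-ξ ^ 2 / (4 * D * τ))

lemma heatKernel_nonneg (D ξ τ : ℝ) : 0 ≤ heatKernel D ξ τ :=
  mul_nonneg (inv_nonneg.2 (Real.sqrt_nonneg _)) (Real.exp_pos _).le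

lemma heatKernel_eq_gaussianPDFReal {D Δt : ℝ} (v : NNReal) (hv : (v : ℝ) = 2 * D * Δt)
    (μ0 x : ℝ) :
    heatKernel D (x - μ0) Δt = gaussianPDFReal μ0 v x := by
  rw [heatKernel, gaussianPDFReal, hv]
  ring_nf

lemma heatKernel_le {D Δt : ℝ} (ξ0 : ℝ) (hD : 0 < D) (hΔt : 0 < Δt) :
    ‖heatKernel D ξ0 Δt‖ ≤ (Real.sqrt (4 * Real.pi * D * Δt))⁻¹ := by
  rw [Real.norm_eq_abs, abs_of_nonneg (heatKernel_nonneg _ _ _), heatKernel]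
  calc (Real.sqrt (4 * Real.pi * D * Δt))⁻¹ * Real.exp (-ξ0 ^ 2 / (4 * D * Δt))
      ≤ (Real.sqrt (4 * Real.pi * D * Δt))⁻¹ * 1 := by
        apply mul_le_mul_of_nonneg_left _ (inv_nonneg.2 (Real.sqrt_nonneg _))
        rw [Real.exp_le_one_iff]
        exact div_nonpos_of_nonpos_of_nonneg (neg_nonpos.2 (sq_nonneg _)) (by positivity)
    _ = _ := mul_one _

lemma pbd_integral_ite {Ω : Type*} [MeasurableSpace Ω] (P : Measure Ω) [IsFiniteMeasure P]
    (c : Ω → Prop) [DecidablePred c] (hc : MeasurableSet {ω | c ω}) (u w : ℝ) :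
    Integrable (fun ω => if c ω then u else w) P ∧
      ∫ ω, (if c ω then u else w) ∂P
        = (P {ω | c ω}).toReal * u + (P {ω | c ω}ᶜ).toReal * w := by
  have hfe : (fun ω => if c ω then u else w)
      = fun ω => {ω | c ω}.indicator (fun _ => u) ω + {ω | c ω}ᶜ.indicator (fun _ => w) ω := by
    funext ω; by_cases h : c ω <;> simp [h]
  constructor
  · rw [hfe]
    exact ((integrable_const u).indicator hc).add ((integrable_const w).indicator hc.compl)
  · rw [hfe, integral_add ((integrable_const u).indicator hc)
        ((integrable_const w).indicator hc.compl),
      integral_indicator_const u hc, integral_indicator_const w hc.compl,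
      smul_eq_mul, smul_eq_mul]
    rfl

/-- One-step mean-consistency of the second PBD algorithm (B1)–(B5), with
overlap region: `Ω_P = (−∞,0)`, `Ω_B = (−d,∞)`, `O = (−d,0)`. Starting from the combined
state `μ = p 1_{Ω_P} dx + Σ_i δ_{x_i}`, one step creates a particle at `Y ∼ p̃/α` on
`Ω_B ∖ Ω_P = (0,∞)` with probability `α = ∫_0^∞ p̃`, rescales the diffused continuum density
by `β`, moves each particle to `Z i = x i + √(2DΔt) η i`, absorbs into the continuum the
particles with `Z i ≤ −d`, and keeps the particles with `Z i > −d`. Then for every Borel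
set `A ⊆ ℝ`, `E[q(A ∩ Ω_P)] + E[#{updated particles in A}] = ∫_A ∫_ℝ K(x − x′, Δt) dμ(x′) dx`. -/
theorem pbd_overlap_algorithm_mean_consistency
    {Ω : Type*} [MeasurableSpace Ω] (P : Measure Ω) [IsProbabilityMeasure P]
    (D Δt d : ℝ) (hD : 0 < D) (hΔt : 0 < Δt) (hd : 0 < d) (N : ℕ)
    -- the continuum density on `Ω_P = (−∞, 0)` with total mass `N − m`
    (p : ℝ → ℝ) (hp0 : ∀ x ∈ Iio (0 : ℝ), 0 ≤ p x) (hpint : IntegrableOn p (Iio 0))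
    (m : ℕ) (hmass : ∫ x in Iio (0 : ℝ), p x = (N : ℝ) - (m : ℝ))
    -- the particle positions in `Ω_B = (−d, ∞)`
    (xs : Fin m → ℝ) (hxs : ∀ i, xs i ∈ Ioi (-d))
    -- the diffused continuum density `p̃` and the crossing mass `α`
    (ptilde : ℝ → ℝ)
    (hptilde : ∀ x, ptilde x = ∫ y in Iio (0 : ℝ), heatKernel D (x - y) Δt * p y)
    (α : ℝ) (hα : α = ∫ x in Ioi (0 : ℝ), ptilde x)
    (hα0 : 0 < α) (hα1 : α < 1) (hαN : α < (N : ℝ) - (m : ℝ))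
    -- the Bernoulli(α) creation event `ξ` and creation position `Y` with density `p̃/α` on
    -- `Ω_B ∖ Ω_P = (0,∞)`, encoded jointly: `P(ξ = 1 ∧ Y ∈ B) = ∫_{B ∩ (0,∞)} p̃`
    (ξ : Ω → Bool) (Y : Ω → ℝ) (hξmeas : Measurable ξ) (hYmeas : Measurable Y)
    (hjoint : ∀ B : Set ℝ, MeasurableSet B →
      P {ω | ξ ω = true ∧ Y ω ∈ B} = ENNReal.ofReal (∫ x in B ∩ Ioi (0 : ℝ), ptilde x))
    -- the independent standard-normal displacements of the existing particles
    (η : Fin m → Ω → ℝ)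
    (hηmeas : ∀ i, Measurable (η i))
    (hηlaw : ∀ i, Measure.map (η i) P = gaussianReal 0 1)
    (hηindep : iIndepFun η P)
    (hindep : IndepFun (fun ω => (ξ ω, Y ω)) (fun ω i => η i ω) P) :
    -- conclusion: for every Borel `A ⊆ ℝ`, the expected updated continuum mass on `A ∩ Ω_P`
    -- plus the expected number of updated particles in `A` equals the heat-kernel evolution
    -- of the combined initial state `μ = p 1_{Ω_P} dx + Σ_i δ_{x_i}`
    ∀ A : Set ℝ, MeasurableSet A →
      (∫ ω, ((if ξ ω = true then ((N : ℝ) - (m : ℝ) - 1) / ((N : ℝ) - (m : ℝ) - α)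
              else ((N : ℝ) - (m : ℝ)) / ((N : ℝ) - (m : ℝ) - α)) *
               (∫ x in A ∩ Iio (0 : ℝ), ptilde x) +
             ∑ i, if xs i + Real.sqrt (2 * D * Δt) * η i ω ∈ A ∩ Iio (0 : ℝ) ∧
                    xs i + Real.sqrt (2 * D * Δt) * η i ω ≤ -d then (1 : ℝ) else 0) ∂P) +
      (∫ ω, ((if ξ ω = true ∧ Y ω ∈ A then (1 : ℝ) else 0) +
             ∑ i, if xs i + Real.sqrt (2 * D * Δt) * η i ω ∈ A ∧
                    -d < xs i + Real.sqrt (2 * D * Δt) * η i ω then (1 : ℝ) else 0) ∂P)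
      = ∫ x in A, ∫ y, heatKernel D (x - y) Δt
          ∂(volume.withDensity (fun y => ENNReal.ofReal ((Iio (0 : ℝ)).indicator p y)) +
            ∑ i : Fin m, Measure.dirac (xs i)) := by
  intro A hA
  set c : ℝ := Real.sqrt (2 * D * Δt) with hcdef
  set nr : ℝ := (N : ℝ) - (m : ℝ) with hnrdef
  set C : ℝ := ∫ x in A ∩ Iio (0 : ℝ), ptilde x with hCdef
  have hc2 : c ^ 2 = 2 * D * Δt := Real.sq_sqrt (by positivity)
  set v : NNReal := ⟨2 * D * Δt, by positivity⟩ with hvdef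
  have hvco : (v : ℝ) = 2 * D * Δt := rfl
  have hv0 : v ≠ 0 := by
    rw [← NNReal.coe_ne_zero, hvco]
    positivity
  have hKg : ∀ μ0 x : ℝ, heatKernel D (x - μ0) Δt = gaussianPDFReal μ0 v x :=
    fun μ0 x => heatKernel_eq_gaussianPDFReal v hvco μ0 x
  -- nonnegativity of `ptilde`
  have hptnn : ∀ x, 0 ≤ ptilde x := fun x => by
    rw [hptilde x]
    exact setIntegral_nonneg measurableSet_Iio fun y hy =>
      mul_nonneg (heatKernel_nonneg _ _ _) (hp0 y hy)
  -- integrability of `ptilde` (it is a convolution of integrable functions)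
  have hind_int : Integrable ((Iio (0 : ℝ)).indicator p) volume :=
    (integrable_indicator_iff measurableSet_Iio).2 hpint
  have hg_int : Integrable (fun t => heatKernel D t Δt) volume := by
    have he : (fun t => heatKernel D t Δt) = gaussianPDFReal 0 v := by
      funext t
      have h := hKg 0 t
      simpa using h
    rw [he]; exact integrable_gaussianPDFReal 0 v
  have hpt_int : Integrable ptilde volume := by
    have hconv := hind_int.integrable_convolution (ContinuousLinearMap.mul ℝ ℝ) hg_int
    refine hconv.congr (Filter.EventuallyEq.of_eq ?_)
    funext x
    rw [convolution_def, hptilde x, ← integral_indicator measurableSet_Iio]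
    congr 1
    funext t
    by_cases h : t ∈ Iio (0 : ℝ)
    · simp [Set.indicator_of_mem h, ContinuousLinearMap.mul_apply', mul_comm]
    · simp [Set.indicator_of_notMem h]
  -- law of the moved particles
  have hZmeas : ∀ i, Measurable (fun ω => xs i + c * η i ω) := fun i =>
    ((hηmeas i).const_mul c).const_add (xs i)
  have hveq : NNReal.mk (c ^ 2) (sq_nonneg c) * 1 = v := by
    rw [mul_one]
    exact Subtype.ext hc2
  have hZlaw : ∀ i, Measure.map (fun ω => xs i + c * η i ω) P = gaussianReal (xs i) v := by
    intro i
    have h1 : Measure.map (fun ω => c * η i ω) P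
        = gaussianReal 0 (NNReal.mk (c ^ 2) (sq_nonneg c) * 1) := by
      have hcomp : (fun ω => c * η i ω) = (fun x => c * x) ∘ η i := rfl
      rw [hcomp, ← Measure.map_map (measurable_const_mul c) (hηmeas i), hηlaw i,
        gaussianReal_map_const_mul c, mul_zero]
    have hcomp2 : (fun ω => xs i + c * η i ω)
        = (fun x => xs i + x) ∘ (fun ω => c * η i ω) := rfl
    rw [hcomp2, ← Measure.map_map (measurable_const_add (xs i)) ((hηmeas i).const_mul c),
      h1, gaussianReal_map_const_add, zero_add, hveq]
  have hPZ : ∀ (i : Fin m) (S : Set ℝ), MeasurableSet S →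
      (P {ω | xs i + c * η i ω ∈ S}).toReal = ∫ x in S, gaussianPDFReal (xs i) v x := by
    intro i S hS
    have h1 : {ω | xs i + c * η i ω ∈ S} = (fun ω => xs i + c * η i ω) ⁻¹' S := rfl
    rw [h1, ← Measure.map_apply (hZmeas i) hS, hZlaw i,
      gaussianReal_apply_eq_integral _ hv0 S,
      ENNReal.toReal_ofReal (setIntegral_nonneg hS fun x _ => gaussianPDFReal_nonneg _ _ _)]
  have hmeasZset : ∀ (i : Fin m) (S : Set ℝ), MeasurableSet S →
      MeasurableSet {ω | xs i + c * η i ω ∈ S} := fun i S hS => (hZmeas i) hS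
  -- the Bernoulli probability
  have hSξ : MeasurableSet {ω | ξ ω = true} := hξmeas (measurableSet_singleton true)
  have hPξ : P {ω | ξ ω = true} = ENNReal.ofReal α := by
    have h := hjoint univ MeasurableSet.univ
    simpa [hα] using h
  -- first Ω-integral
  have hfun1 : (fun ω => (if ξ ω = true then (nr - 1) / (nr - α) else nr / (nr - α)) * C
        + ∑ i, if xs i + c * η i ω ∈ A ∩ Iio (0 : ℝ) ∧ xs i + c * η i ω ≤ -d
            then (1 : ℝ) else 0)
      = fun ω => (if ξ ω = true then ((nr - 1) / (nr - α)) * C else (nr / (nr - α)) * C)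
        + ∑ i, if xs i + c * η i ω ∈ A ∩ Iic (-d) then (1 : ℝ) else 0 := by
    funext ω
    congr 1
    · by_cases h : ξ ω = true <;> simp [h]
    · refine Finset.sum_congr rfl fun i _ => ?_
      by_cases h : xs i + c * η i ω ∈ A ∩ Iic (-d)
      · have hlt : xs i + c * η i ω < 0 := lt_of_le_of_lt h.2 (neg_lt_zero.mpr hd)
        rw [if_pos h, if_pos ⟨⟨h.1, hlt⟩, h.2⟩]
      · rw [if_neg h, if_neg fun hcon => h ⟨hcon.1.1, hcon.2⟩]
  have hint_sum1 : ∀ i : Fin m,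
      Integrable (fun ω => if xs i + c * η i ω ∈ A ∩ Iic (-d) then (1 : ℝ) else 0) P :=
    fun i => (pbd_integral_ite P _ (hmeasZset i _ (hA.inter measurableSet_Iic)) 1 0).1
  have hint_b : Integrable
      (fun ω => if ξ ω = true then ((nr - 1) / (nr - α)) * C else (nr / (nr - α)) * C) P :=
    (pbd_integral_ite P _ hSξ _ _).1
  have hPξr : (P {ω | ξ ω = true}).toReal = α := by
    rw [hPξ, ENNReal.toReal_ofReal hα0.le]
  have hPξc : (P {ω | ξ ω = true}ᶜ).toReal = 1 - α := by
    rw [measure_compl hSξ (measure_ne_top _ _), measure_univ, hPξ,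
      ← ENNReal.ofReal_one, ← ENNReal.ofReal_sub 1 hα0.le,
      ENNReal.toReal_ofReal (by linarith)]
  have e1 : (∫ ω, ((if ξ ω = true then (nr - 1) / (nr - α) else nr / (nr - α)) * C
        + ∑ i, if xs i + c * η i ω ∈ A ∩ Iio (0 : ℝ) ∧ xs i + c * η i ω ≤ -d
            then (1 : ℝ) else 0) ∂P)
      = C + ∑ i : Fin m, ∫ x in A ∩ Iic (-d), gaussianPDFReal (xs i) v x := by
    rw [hfun1, integral_add hint_b (integrable_finset_sum _ fun i _ => hint_sum1 i),
      integral_finset_sum _ fun i _ => hint_sum1 i,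
      (pbd_integral_ite P (fun ω => ξ ω = true) hSξ (((nr - 1) / (nr - α)) * C)
        ((nr / (nr - α)) * C)).2, hPξr, hPξc]
    congr 1
    · have hne : nr - α ≠ 0 := by linarith
      field_simp
      ring
    · refine Finset.sum_congr rfl fun i _ => ?_
      rw [(pbd_integral_ite P _ (hmeasZset i _ (hA.inter measurableSet_Iic)) 1 0).2,
        mul_one, mul_zero, add_zero, hPZ i _ (hA.inter measurableSet_Iic)]
  -- second Ω-integral
  have hSY : MeasurableSet {ω | ξ ω = true ∧ Y ω ∈ A} := by
    have h : {ω | ξ ω = true ∧ Y ω ∈ A} = {ω | ξ ω = true} ∩ (Y ⁻¹' A) := rfl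
    rw [h]; exact hSξ.inter (hYmeas hA)
  have hPY : (P {ω | ξ ω = true ∧ Y ω ∈ A}).toReal = ∫ x in A ∩ Ioi (0 : ℝ), ptilde x := by
    rw [hjoint A hA, ENNReal.toReal_ofReal
      (setIntegral_nonneg (hA.inter measurableSet_Ioi) fun x _ => hptnn x)]
  have hfun2 : (fun ω => (if ξ ω = true ∧ Y ω ∈ A then (1 : ℝ) else 0)
        + ∑ i, if xs i + c * η i ω ∈ A ∧ -d < xs i + c * η i ω then (1 : ℝ) else 0)
      = fun ω => (if ξ ω = true ∧ Y ω ∈ A then (1 : ℝ) else 0)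
        + ∑ i, if xs i + c * η i ω ∈ A ∩ Ioi (-d) then (1 : ℝ) else 0 := by
    funext ω
    congr 1
  have hint_sum2 : ∀ i : Fin m,
      Integrable (fun ω => if xs i + c * η i ω ∈ A ∩ Ioi (-d) then (1 : ℝ) else 0) P :=
    fun i => (pbd_integral_ite P _ (hmeasZset i _ (hA.inter measurableSet_Ioi)) 1 0).1
  have hint_Y : Integrable (fun ω => if ξ ω = true ∧ Y ω ∈ A then (1 : ℝ) else 0) P :=
    (pbd_integral_ite P _ hSY 1 0).1
  have e2 : (∫ ω, ((if ξ ω = true ∧ Y ω ∈ A then (1 : ℝ) else 0)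
        + ∑ i, if xs i + c * η i ω ∈ A ∧ -d < xs i + c * η i ω then (1 : ℝ) else 0) ∂P)
      = (∫ x in A ∩ Ioi (0 : ℝ), ptilde x)
        + ∑ i : Fin m, ∫ x in A ∩ Ioi (-d), gaussianPDFReal (xs i) v x := by
    rw [hfun2, integral_add hint_Y (integrable_finset_sum _ fun i _ => hint_sum2 i),
      integral_finset_sum _ fun i _ => hint_sum2 i]
    congr 1
    · rw [(pbd_integral_ite P (fun ω => ξ ω = true ∧ Y ω ∈ A) hSY 1 0).2,
        mul_one, mul_zero, add_zero, hPY]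
    · refine Finset.sum_congr rfl fun i _ => ?_
      rw [(pbd_integral_ite P _ (hmeasZset i _ (hA.inter measurableSet_Ioi)) 1 0).2,
        mul_one, mul_zero, add_zero, hPZ i _ (hA.inter measurableSet_Ioi)]
  -- the right-hand side
  set μ1 : Measure ℝ :=
    volume.withDensity (fun y => ENNReal.ofReal ((Iio (0 : ℝ)).indicator p y)) with hμ1
  set μ2 : Measure ℝ := ∑ i : Fin m, Measure.dirac (xs i) with hμ2
  haveI hfin1 : IsFiniteMeasure μ1 := by
    constructor
    rw [hμ1, withDensity_apply _ MeasurableSet.univ, Measure.restrict_univ]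
    exact hind_int.lintegral_lt_top
  haveI hfin2 : IsFiniteMeasure μ2 := by
    constructor
    rw [hμ2, Measure.finset_sum_apply]
    simp
  have hinner : ∀ x : ℝ, (∫ y, heatKernel D (x - y) Δt ∂(μ1 + μ2))
      = ptilde x + ∑ _i : Fin m, gaussianPDFReal ((xs _i)) v x := by
    intro x
    have hcont : Continuous fun y : ℝ => heatKernel D (x - y) Δt := by
      unfold heatKernel
      exact continuous_const.mul (Real.continuous_exp.comp (by fun_prop))
    have hintgr : ∀ (μ' : Measure ℝ), IsFiniteMeasure μ' →
        Integrable (fun y => heatKernel D (x - y) Δt) μ' := by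
      intro μ' hfm
      exact (integrable_const ((Real.sqrt (4 * Real.pi * D * Δt))⁻¹)).mono'
        hcont.aestronglyMeasurable (ae_of_all _ fun y => heatKernel_le _ hD hΔt)
    rw [integral_add_measure (hintgr μ1 hfin1) (hintgr μ2 hfin2)]
    have hdirac : (∫ y, heatKernel D (x - y) Δt ∂μ2)
        = ∑ _i : Fin m, gaussianPDFReal (xs _i) v x := by
      rw [hμ2, integral_finset_sum_measure fun i _ => hintgr _ inferInstance]
      refine Finset.sum_congr rfl fun i _ => ?_
      rw [integral_dirac, hKg]
    have hwd : (∫ y, heatKernel D (x - y) Δt ∂μ1) = ptilde x := by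
      have hμ1' : μ1 = volume.withDensity
          (fun y => (((Iio (0 : ℝ)).indicator p y).toNNReal : ENNReal)) := rfl
      have haem : AEMeasurable (fun y => ((Iio (0 : ℝ)).indicator p y).toNNReal) volume := by
        have h1 : AEStronglyMeasurable ((Iio (0 : ℝ)).indicator p) volume :=
          (aestronglyMeasurable_indicator_iff measurableSet_Iio).2 hpint.1
        exact measurable_real_toNNReal.comp_aemeasurable h1.aemeasurable
      rw [hμ1', integral_withDensity_eq_integral_smul₀ haem]
      have heq : (fun y => ((Iio (0 : ℝ)).indicator p y).toNNReal • heatKernel D (x - y) Δt)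
          = (Iio (0 : ℝ)).indicator (fun y => heatKernel D (x - y) Δt * p y) := by
        funext y
        by_cases h : y ∈ Iio (0 : ℝ)
        · simp [Set.indicator_of_mem h, NNReal.smul_def,
            Real.coe_toNNReal _ (hp0 y h), mul_comm]
        · simp [Set.indicator_of_notMem h]
      rw [heq, integral_indicator measurableSet_Iio, ← hptilde x]
    rw [hdirac, hwd]
  rw [setIntegral_congr_fun hA fun x _ => hinner x,
    integral_add hpt_int.integrableOn
      (Integrable.integrableOn (integrable_finset_sum _ fun i _ =>
        integrable_gaussianPDFReal (xs i) v)),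
    integral_finset_sum _ fun i _ => (integrable_gaussianPDFReal (xs i) v).integrableOn,
    e1, e2]
  -- now pure arithmetic of set integrals
  have hA_split : ∀ i : Fin m,
      (∫ x in A ∩ Iic (-d), gaussianPDFReal (xs i) v x)
        + ∫ x in A ∩ Ioi (-d), gaussianPDFReal (xs i) v x
      = ∫ x in A, gaussianPDFReal (xs i) v x := by
    intro i
    have hdisj : Disjoint (A ∩ Iic (-d)) (A ∩ Ioi (-d)) :=
      Set.disjoint_left.2 fun x hx1 hx2 =>
        absurd (mem_Ioi.1 hx2.2) (not_lt.2 (mem_Iic.1 hx1.2))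
    have hu := setIntegral_union hdisj (hA.inter measurableSet_Ioi)
      ((integrable_gaussianPDFReal (xs i) v).integrableOn)
      ((integrable_gaussianPDFReal (xs i) v).integrableOn)
    rw [show (A ∩ Iic (-d)) ∪ (A ∩ Ioi (-d)) = A by
      rw [← Set.inter_union_distrib_left, Set.Iic_union_Ioi, Set.inter_univ]] at hu
    exact hu.symm
  have hpt_split : C + ∫ x in A ∩ Ioi (0 : ℝ), ptilde x = ∫ x in A, ptilde x := by
    have hdisj : Disjoint (A ∩ Iio (0 : ℝ)) (A ∩ Ioi (0 : ℝ)) :=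
      Set.disjoint_left.2 fun x hx1 hx2 =>
        absurd (mem_Ioi.1 hx2.2) (not_lt.2 (mem_Iio.1 hx1.2).le)
    have hu := setIntegral_union hdisj (hA.inter measurableSet_Ioi)
      hpt_int.integrableOn hpt_int.integrableOn
    rw [show (A ∩ Iio (0 : ℝ)) ∪ (A ∩ Ioi (0 : ℝ)) = A ∩ ({(0 : ℝ)}ᶜ) by
      rw [← Set.inter_union_distrib_left, Set.Iio_union_Ioi]] at hu
    have hae0 : (A ∩ ({(0 : ℝ)}ᶜ) : Set ℝ) =ᵐ[volume] A := by
      have h0 : ({(0 : ℝ)}ᶜ : Set ℝ) ∈ MeasureTheory.ae volume := by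
        rw [mem_ae_iff, compl_compl]
        exact measure_singleton 0
      filter_upwards [h0] with x hx
      exact eq_iff_iff.2 ⟨fun h => h.1, fun h => ⟨h, hx⟩⟩
    rw [setIntegral_congr_set hae0] at hu
    exact hu.symm
  have hsum_split : (∑ i : Fin m, ∫ x in A, gaussianPDFReal (xs i) v x)
      = (∑ i : Fin m, ∫ x in A ∩ Iic (-d), gaussianPDFReal (xs i) v x)
        + ∑ i : Fin m, ∫ x in A ∩ Ioi (-d), gaussianPDFReal (xs i) v x := by
    rw [← Finset.sum_add_distrib]
    exact Finset.sum_congr rfl fun i _ => (hA_split i).symm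
  rw [hsum_split, ← hpt_split]
  ring
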